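/- Let φ ∈ C₋ and suppose g : ℚ_p^n \ {0} → ℂ is a function with the following property: for every x ∈ ℚ_p^n \ {0} there exists a compact open subgroup Λ₀ of (ℚ_p^n, +) such that g(x) = ∫_Λ ψ(ξ·x) φ(ξ) dμ(ξ) for every compact open subgroup Λ ⊇ Λ₀. Then for every ξ₀ ∈ ℚ_p^n \ {0}, the function x ↦ g(x)·(ψ(−(ξ₀·x)) − 1) is absolutely integrable on ℚ_p^n \ {0} with respect to μ, and ∫_{ℚ_p^n} g(x)·(ψ(−(ξ₀·x)) − 1) dμ(x) = φ(ξ₀). -/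

import Mathlib

open MeasureTheory
open scoped MatrixGroups

noncomputable section

/-- The action of `g ∈ GL_n(ℤ_p)` on `ℚ_p^n` by matrix multiplication. -/
def glAct (p : ℕ) [Fact p.Prime] (n : ℕ) (g : GL (Fin n) ℤ_[p]) (ξ : Fin n → ℚ_[p]) :
    Fin n → ℚ_[p] :=
  Matrix.mulVec (Matrix.of fun i j => (((g : Matrix (Fin n) (Fin n) ℤ_[p]) i j : ℚ_[p]))) ξ

/-- `φ` is `K`-finite for `K = GL_n(ℤ_p)`. -/
def KFinite (p : ℕ) [Fact p.Prime] (n : ℕ) (φ : (Fin n → ℚ_[p]) → ℂ) : Prop :=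
  FiniteDimensional ℂ
    (Submodule.span ℂ
      (Set.range fun g : GL (Fin n) ℤ_[p] =>
        fun ξ : Fin n → ℚ_[p] => φ (glAct p n g⁻¹ ξ)))

/-- `φ` is locally constant on `ℚ_p^n \ {0}`. -/
def LocConstOff0 (p : ℕ) [Fact p.Prime] (n : ℕ) (φ : (Fin n → ℚ_[p]) → ℂ) : Prop :=
  ∀ ξ : Fin n → ℚ_[p], ξ ≠ 0 → ∃ U ∈ nhds ξ, ∀ η ∈ U, φ η = φ ξ

/-- The space `C`, encoded as functions on `ℚ_p^n` vanishing at `0`. -/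
def Cspace (p : ℕ) [Fact p.Prime] (n : ℕ) : Set ((Fin n → ℚ_[p]) → ℂ) :=
  {φ | φ 0 = 0 ∧ LocConstOff0 p n φ ∧ KFinite p n φ}

/-- `C₋`: members of `C` supported away from `0`. -/
def Cminus (p : ℕ) [Fact p.Prime] (n : ℕ) : Set ((Fin n → ℚ_[p]) → ℂ) :=
  {φ ∈ Cspace p n | ∃ ε > (0 : ℝ), ∀ ξ : Fin n → ℚ_[p], ‖ξ‖ < ε → φ ξ = 0}

/-- `ψ` is an additive character of `ℚ_p`, trivial on `ℤ_p` but not on `p⁻¹ℤ_p`. -/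
def IsStdAddChar (p : ℕ) [Fact p.Prime] (ψ : ℚ_[p] → ℂ) : Prop :=
  (∀ a b : ℚ_[p], ψ (a + b) = ψ a * ψ b) ∧
  (∀ a : ℚ_[p], ‖ψ a‖ = 1) ∧
  (∀ z : ℚ_[p], ‖z‖ ≤ 1 → ψ z = 1) ∧
  (∃ y : ℚ_[p], ‖y‖ = (p : ℝ) ∧ ψ y ≠ 1)

namespace Stmt6

variable {p : ℕ} [Fact p.Prime] {n : ℕ}

/-! ### ψ basics -/

lemma psi_zero {ψ : ℚ_[p] → ℂ} (hψ : IsStdAddChar p ψ) : ψ 0 = 1 :=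
  hψ.2.2.1 0 (by norm_num)

lemma psi_ne_zero {ψ : ℚ_[p] → ℂ} (hψ : IsStdAddChar p ψ) (a : ℚ_[p]) : ψ a ≠ 0 := by
  intro h
  have := hψ.2.1 a
  rw [h] at this
  simp at this

lemma psi_neg_mul {ψ : ℚ_[p] → ℂ} (hψ : IsStdAddChar p ψ) (a : ℚ_[p]) :
    ψ (-a) * ψ a = 1 := by
  rw [← hψ.1]; simp [psi_zero hψ]

lemma psi_continuous {ψ : ℚ_[p] → ℂ} (hψ : IsStdAddChar p ψ) : Continuous ψ := by
  apply continuous_iff_continuousAt.2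
  intro a
  have : ∀ b : ℚ_[p], ‖b - a‖ ≤ 1 → ψ b = ψ a := by
    intro b hb
    have : ψ b = ψ (a + (b - a)) := by ring_nf
    rw [this, hψ.1, hψ.2.2.1 _ hb, mul_one]
  apply ContinuousAt.congr (continuousAt_const (y := ψ a))
  filter_upwards [Metric.closedBall_mem_nhds a one_pos]
    with b hb
  exact (this b (by simpa [dist_eq_norm] using hb)).symm

/-! ### norm basics on `E = Fin n → ℚ_[p]` -/

lemma E_norm_nonneg (x : Fin n → ℚ_[p]) : (0:ℝ) ≤ ‖x‖ := norm_nonneg x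

lemma E_exists_max (hn : 0 < n) (x : Fin n → ℚ_[p]) : ∃ i, ‖x‖ = ‖x i‖ := by
  have hne : (Finset.univ : Finset (Fin n)).Nonempty := by
    simpa [Finset.univ_nonempty_iff] using Fin.pos_iff_nonempty.1 hn
  obtain ⟨i, -, hi⟩ := Finset.exists_mem_eq_sup Finset.univ hne (fun i => ‖x i‖₊)
  refine ⟨i, ?_⟩
  rw [Pi.norm_def, hi]
  rfl

lemma E_nonarch (u v : Fin n → ℚ_[p]) : ‖u + v‖ ≤ max ‖u‖ ‖v‖ := by
  rw [pi_norm_le_iff_of_nonneg (le_max_of_le_left (norm_nonneg u))]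
  intro i
  refine le_trans (Padic.nonarchimedean _ _) ?_
  exact max_le_max (norm_le_pi_norm u i) (norm_le_pi_norm v i)

/-- norms of nonzero vectors are powers of p -/
lemma E_norm_eq_zpow (hn : 0 < n) {x : Fin n → ℚ_[p]} (hx : x ≠ 0) :
    ∃ k : ℤ, ‖x‖ = (p : ℝ) ^ k := by
  obtain ⟨i, hi⟩ := E_exists_max hn x
  have hxi : x i ≠ 0 := by
    intro h
    apply hx
    funext j
    have h2 : ‖x‖ = 0 := by rw [hi, h, norm_zero]
    have := norm_le_pi_norm x j
    rw [h2] at this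
    simpa using norm_le_zero_iff.1 this
  exact ⟨-(x i).valuation, by rw [hi, Padic.norm_eq_zpow_neg_valuation hxi]⟩

lemma p_one_lt : (1:ℝ) < (p:ℝ) := by
  exact_mod_cast Nat.Prime.one_lt (Fact.out (p := p.Prime))

lemma p_pos : (0:ℝ) < (p:ℝ) := lt_trans one_pos p_one_lt

/-- if a power-of-p norm exceeds p^j then it is ≥ p^(j+1) -/
lemma zpow_lt_succ {a : ℝ} {j : ℤ} (ha : ∃ k : ℤ, a = (p:ℝ)^k) (h : (p:ℝ)^j < a) :
    (p:ℝ)^(j+1) ≤ a := by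
  obtain ⟨k, rfl⟩ := ha
  have hj : j < k := by
    by_contra hc
    exact absurd (zpow_le_zpow_right₀ (le_of_lt p_one_lt) (not_lt.1 hc)) (not_le.2 h)
  exact zpow_le_zpow_right₀ (le_of_lt p_one_lt) hj

lemma dot_norm_le (ξ x : Fin n → ℚ_[p]) : ‖∑ i, ξ i * x i‖ ≤ ‖ξ‖ * ‖x‖ := by
  have h : ∀ (s : Finset (Fin n)), ‖∑ i ∈ s, ξ i * x i‖ ≤ ‖ξ‖ * ‖x‖ := by
    intro s
    induction s using Finset.induction with
    | empty => simp [mul_nonneg (norm_nonneg ξ) (norm_nonneg x)]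
    | insert _ _ hi ih =>
      rename_i a s
      rw [Finset.sum_insert hi]
      refine le_trans (Padic.nonarchimedean _ _) (max_le ?_ ih)
      rw [norm_mul]
      exact mul_le_mul (norm_le_pi_norm ξ a) (norm_le_pi_norm x a) (norm_nonneg _)
        (norm_nonneg _)
  exact h Finset.univ

lemma dot_add_left (ξ η x : Fin n → ℚ_[p]) :
    ∑ i, (ξ + η) i * x i = (∑ i, ξ i * x i) + ∑ i, η i * x i := by
  rw [← Finset.sum_add_distrib]
  congr 1; ext i; simp [add_mul]

lemma dot_single (i : Fin n) (t : ℚ_[p]) (x : Fin n → ℚ_[p]) :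
    ∑ j, (Pi.single i t : Fin n → ℚ_[p]) j * x j = t * x i := by
  rw [Finset.sum_eq_single i]
  · simp
  · intro b _ hb; simp [Pi.single_eq_of_ne hb]
  · simp

end Stmt6

namespace Stmt6
variable {p : ℕ} [Fact p.Prime] {n : ℕ}

/-! ### Balls -/

def Bz (p : ℕ) [Fact p.Prime] (n : ℕ) (k : ℤ) : Set (Fin n → ℚ_[p]) :=
  Metric.closedBall 0 ((p:ℝ)^k)

lemma mem_Bz {k : ℤ} {x : Fin n → ℚ_[p]} : x ∈ Bz p n k ↔ ‖x‖ ≤ (p:ℝ)^k := by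
  simp [Bz, Metric.mem_closedBall, dist_zero_right]

lemma Bz_compact (k : ℤ) : IsCompact (Bz p n k) := isCompact_closedBall _ _

lemma Bz_mono {j k : ℤ} (h : j ≤ k) : Bz p n j ⊆ Bz p n k :=
  Metric.closedBall_subset_closedBall (zpow_le_zpow_right₀ (le_of_lt p_one_lt) h)

lemma E_sub_nonarch (u v : Fin n → ℚ_[p]) : ‖u - v‖ ≤ max ‖u‖ ‖v‖ := by
  have := E_nonarch u (-v)
  simpa [sub_eq_add_neg] using this

lemma Bz_add_invariant {k : ℤ} {a : Fin n → ℚ_[p]} (ha : ‖a‖ ≤ (p:ℝ)^k) :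
    (fun x => a + x) ⁻¹' (Bz p n k) = Bz p n k := by
  ext x
  simp only [Set.mem_preimage, mem_Bz]
  constructor
  · intro h
    have : ‖x‖ = ‖(a + x) - a‖ := by ring_nf
    rw [this]
    exact le_trans (E_sub_nonarch _ _) (max_le h ha)
  · intro h
    exact le_trans (E_nonarch a x) (max_le ha h)

variable [MeasurableSpace ℚ_[p]] [BorelSpace ℚ_[p]]
variable {μ : Measure (Fin n → ℚ_[p])} [μ.IsAddHaarMeasure]

lemma Bz_measurable (k : ℤ) : MeasurableSet (Bz p n k) := measurableSet_closedBall

lemma setIntegral_add_invariant {s : Set (Fin n → ℚ_[p])} {a : Fin n → ℚ_[p]}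
    (hs : (fun x => a + x) ⁻¹' s = s) (f : (Fin n → ℚ_[p]) → ℂ) :
    ∫ x in s, f (a + x) ∂μ = ∫ x in s, f x ∂μ := by
  conv_lhs => rw [← hs]
  exact (measurePreserving_add_left μ a).setIntegral_preimage_emb
    (measurableEmbedding_addLeft a) f s

lemma dot_single_right (i : Fin n) (t : ℚ_[p]) (η : Fin n → ℚ_[p]) :
    ∑ j, η j * (Pi.single i t : Fin n → ℚ_[p]) j = η i * t := by
  rw [Finset.sum_eq_single i]
  · simp
  · intro b _ hb; simp [Pi.single_eq_of_ne hb]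
  · simp

/-- vanishing of character integrals over balls -/
lemma setIntegral_char_eq_zero (hn : 0 < n) {ψ : ℚ_[p] → ℂ} (hψ : IsStdAddChar p ψ)
    {η : Fin n → ℚ_[p]} {k : ℤ} (hη : (p:ℝ)^(-k) < ‖η‖) :
    ∫ x in Bz p n k, ψ (∑ i, η i * x i) ∂μ = 0 := by
  have hη0 : η ≠ 0 := by
    intro h
    rw [h, norm_zero] at hη
    exact absurd hη (not_lt.2 (zpow_nonneg (le_of_lt p_pos) _))
  obtain ⟨i, hi⟩ := E_exists_max hn η
  have hηi : η i ≠ 0 := by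
    intro h
    rw [h, norm_zero] at hi
    exact hη0 (norm_eq_zero.1 hi)
  obtain ⟨y, hy, hy1⟩ := hψ.2.2.2
  have hηlb : (p:ℝ)^(-k+1) ≤ ‖η‖ := zpow_lt_succ (E_norm_eq_zpow hn hη0) hη
  set t : ℚ_[p] := y / η i with ht
  set x₀ : Fin n → ℚ_[p] := Pi.single i t with hx₀def
  have hnt : ‖t‖ = (p:ℝ) * ‖η‖⁻¹ := by
    rw [ht, norm_div, hy, hi]
    ring
  have htle : ‖t‖ ≤ (p:ℝ)^k := by
    rw [hnt]
    have h1 : ‖η‖⁻¹ ≤ ((p:ℝ)^(-k+1))⁻¹ := by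
      apply inv_anti₀ (zpow_pos p_pos _) hηlb
    calc (p:ℝ) * ‖η‖⁻¹ ≤ (p:ℝ) * ((p:ℝ)^(-k+1))⁻¹ :=
          mul_le_mul_of_nonneg_left h1 (le_of_lt p_pos)
      _ = (p:ℝ)^(1:ℤ) * (p:ℝ)^(-(-k+1)) := by rw [zpow_neg, zpow_one]
      _ = (p:ℝ)^(1 + (-(-k+1))) := (zpow_add₀ (ne_of_gt p_pos) _ _).symm
      _ = (p:ℝ)^k := by norm_num
  have hx₀ : ‖x₀‖ ≤ (p:ℝ)^k := by
    rw [pi_norm_le_iff_of_nonneg (zpow_nonneg (le_of_lt p_pos) _)]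
    intro j
    by_cases hj : j = i
    · subst hj; rw [hx₀def]; simpa using htle
    · simp [hx₀def, Pi.single_eq_of_ne hj, zpow_nonneg (le_of_lt p_pos)]
  have hd : ∑ j, η j * x₀ j = y := by
    rw [hx₀def, dot_single_right, ht, mul_div_cancel₀ _ hηi]
  have key : ∫ x in Bz p n k, ψ (∑ i, η i * x i) ∂μ
      = ψ y * ∫ x in Bz p n k, ψ (∑ i, η i * x i) ∂μ := by
    conv_lhs => rw [← setIntegral_add_invariant (Bz_add_invariant hx₀)
      (fun z => ψ (∑ j, η j * z j))]
    rw [← MeasureTheory.integral_const_mul]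
    apply setIntegral_congr_fun (Bz_measurable k)
    intro x _
    have : ∑ j, η j * (x₀ + x) j = y + ∑ j, η j * x j := by
      rw [← hd, ← Finset.sum_add_distrib]
      congr 1; ext j; simp [mul_add]
    simp only [this, hψ.1]
  have h2 : (ψ y - 1) * ∫ x in Bz p n k, ψ (∑ i, η i * x i) ∂μ = 0 := by
    rw [sub_mul, one_mul, ← key, sub_self]
  rcases mul_eq_zero.1 h2 with h | h
  · exact absurd (sub_eq_zero.1 h) hy1
  · exact h

/-- character integrals over balls: trivial case -/
lemma setIntegral_char_eq_measure {ψ : ℚ_[p] → ℂ} (hψ : IsStdAddChar p ψ)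
    {η : Fin n → ℚ_[p]} {k : ℤ} (hη : ‖η‖ ≤ (p:ℝ)^(-k)) :
    ∫ x in Bz p n k, ψ (∑ i, η i * x i) ∂μ = ((μ (Bz p n k)).toReal : ℂ) := by
  have : ∀ x ∈ Bz p n k, ψ (∑ i, η i * x i) = 1 := by
    intro x hx
    apply hψ.2.2.1
    calc ‖∑ i, η i * x i‖ ≤ ‖η‖ * ‖x‖ := dot_norm_le η x
      _ ≤ (p:ℝ)^(-k) * (p:ℝ)^k := by
          apply mul_le_mul hη (mem_Bz.1 hx) (norm_nonneg x) (zpow_nonneg (le_of_lt p_pos) _)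
      _ = 1 := by rw [← zpow_add₀ (ne_of_gt p_pos)]; simp
  rw [setIntegral_congr_fun (Bz_measurable k) this, setIntegral_const]
  simp [Measure.real]

end Stmt6

namespace Meas
variable {p : ℕ} [Fact p.Prime] {n : ℕ}
open Stmt6
open scoped ENNReal

lemma pQ_ne_zero : ((p:ℚ_[p]) ≠ 0) := by
  exact_mod_cast Nat.Prime.ne_zero (Fact.out (p := p.Prime))

def rep (p : ℕ) [Fact p.Prime] (n : ℕ) (k : ℤ) (c : Fin n → Fin p) : Fin n → ℚ_[p] :=
  fun i => (p:ℚ_[p])^(-(k+1)) * ((c i : ℕ) : ℚ_[p])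

lemma norm_rep_le (k : ℤ) (c : Fin n → Fin p) : ‖rep p n k c‖ ≤ (p:ℝ)^(k+1) := by
  rw [pi_norm_le_iff_of_nonneg (zpow_nonneg (le_of_lt p_pos) _)]
  intro i
  rw [rep, norm_mul, Padic.norm_p_zpow, neg_neg]
  calc (p:ℝ)^(k+1) * ‖(((c i : ℕ) : ℤ) : ℚ_[p])‖ ≤ (p:ℝ)^(k+1) * 1 :=
        mul_le_mul_of_nonneg_left (Padic.norm_int_le_one _)
          (zpow_nonneg (le_of_lt p_pos) _)
    _ = (p:ℝ)^(k+1) := mul_one _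

lemma norm_rep_sub {k : ℤ} {c c' : Fin n → Fin p} (h : c ≠ c') :
    (p:ℝ)^(k+1) ≤ ‖rep p n k c - rep p n k c'‖ := by
  obtain ⟨i, hi⟩ := Function.ne_iff.1 h
  have hco : ‖(rep p n k c - rep p n k c') i‖ = (p:ℝ)^(k+1) := by
    have : (rep p n k c - rep p n k c') i
        = (p:ℚ_[p])^(-(k+1)) * ((((c i : ℕ) : ℤ) - ((c' i : ℕ) : ℤ) : ℤ) : ℚ_[p]) := by
      simp only [Pi.sub_apply, rep]
      push_cast
      ring
    rw [this, norm_mul, Padic.norm_p_zpow, neg_neg]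
    have h1 : ‖((((c i : ℕ) : ℤ) - ((c' i : ℕ) : ℤ) : ℤ) : ℚ_[p])‖ = 1 := by
      have hle := Padic.norm_int_le_one (p := p) (((c i : ℕ) : ℤ) - ((c' i : ℕ) : ℤ))
      rcases lt_or_eq_of_le hle with hlt | heq
      · exfalso
        have hdvd := (Padic.norm_intCast_lt_one_iff).1 hlt
        have hz := Int.eq_zero_of_abs_lt_dvd hdvd ?_
        · have : (c i : ℕ) = (c' i : ℕ) := by omega
          exact hi (Fin.ext (by omega))
        · have h1 : ((c i : ℕ) : ℤ) < p := by exact_mod_cast (c i).2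
          have h2 : ((c' i : ℕ) : ℤ) < p := by exact_mod_cast (c' i).2
          have h3 : (0:ℤ) ≤ ((c i : ℕ) : ℤ) := by positivity
          have h4 : (0:ℤ) ≤ ((c' i : ℕ) : ℤ) := by positivity
          rw [abs_lt]
          omega
      · exact heq.symm ▸ rfl
    rw [h1, mul_one]
  calc (p:ℝ)^(k+1) = ‖(rep p n k c - rep p n k c') i‖ := hco.symm
    _ ≤ ‖rep p n k c - rep p n k c'‖ := norm_le_pi_norm _ i

lemma Bz_succ_eq_iUnion (k : ℤ) :
    Bz p n (k+1) = ⋃ c : Fin n → Fin p, Metric.closedBall (rep p n k c) ((p:ℝ)^k) := by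
  ext x
  simp only [Set.mem_iUnion, Metric.mem_closedBall, dist_eq_norm, mem_Bz]
  constructor
  · intro hx
    have hz : ∀ i, ‖(p:ℚ_[p])^(k+1) * x i‖ ≤ 1 := by
      intro i
      rw [norm_mul, Padic.norm_p_zpow]
      calc (p:ℝ)^(-(k+1)) * ‖x i‖ ≤ (p:ℝ)^(-(k+1)) * (p:ℝ)^(k+1) := by
            apply mul_le_mul_of_nonneg_left _ (zpow_nonneg (le_of_lt p_pos) _)
            exact le_trans (norm_le_pi_norm x i) hx
        _ = 1 := by rw [← zpow_add₀ (ne_of_gt p_pos), neg_add_cancel, zpow_zero]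
    set z : Fin n → ℤ_[p] := fun i => ⟨(p:ℚ_[p])^(k+1) * x i, hz i⟩ with hzdef
    refine ⟨fun i => ⟨(z i).appr 1, by simpa using PadicInt.appr_lt (z i) 1⟩, ?_⟩
    rw [pi_norm_le_iff_of_nonneg (zpow_nonneg (le_of_lt p_pos) _)]
    intro i
    have hmem : z i - ((z i).appr 1 : ℤ_[p]) ∈ Ideal.span {(p:ℤ_[p])^(1:ℕ)} :=
      PadicInt.appr_spec 1 (z i)
    have hnorm : ‖z i - ((z i).appr 1 : ℤ_[p])‖ ≤ (p:ℝ)^(-(1:ℤ)) :=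
      (PadicInt.norm_le_pow_iff_mem_span_pow _ 1).2 hmem
    have hco : (x - rep p n k (fun i => ⟨(z i).appr 1, by simpa using PadicInt.appr_lt (z i) 1⟩)) i
        = (p:ℚ_[p])^(-(k+1)) * ((z i : ℚ_[p]) - ((z i).appr 1 : ℚ_[p])) := by
      simp only [Pi.sub_apply, rep, hzdef, mul_sub]
      congr 1
      rw [← mul_assoc, ← zpow_add₀ pQ_ne_zero, neg_add_cancel, zpow_zero, one_mul]
    rw [hco, norm_mul, Padic.norm_p_zpow, neg_neg]
    have : ‖(z i : ℚ_[p]) - ((z i).appr 1 : ℚ_[p])‖ ≤ (p:ℝ)^(-(1:ℤ)) := by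
      have := hnorm
      rw [PadicInt.norm_def] at this
      simpa using this
    calc (p:ℝ)^(k+1) * ‖(z i : ℚ_[p]) - ((z i).appr 1 : ℚ_[p])‖
        ≤ (p:ℝ)^(k+1) * (p:ℝ)^(-(1:ℤ)) :=
          mul_le_mul_of_nonneg_left this (zpow_nonneg (le_of_lt p_pos) _)
      _ = (p:ℝ)^k := by rw [← zpow_add₀ (ne_of_gt p_pos)]; congr 1; ring
  · rintro ⟨c, hc⟩
    have : x = (x - rep p n k c) + rep p n k c := by ring
    rw [this]
    refine le_trans (E_nonarch _ _) (max_le ?_ (norm_rep_le k c))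
    exact le_trans hc (zpow_le_zpow_right₀ (le_of_lt p_one_lt) (by omega))

lemma Bz_succ_disjoint (k : ℤ) :
    Pairwise (Function.onFun Disjoint
      (fun c : Fin n → Fin p => Metric.closedBall (rep p n k c) ((p:ℝ)^k))) := by
  intro c c' hcc
  rw [Function.onFun, Set.disjoint_left]
  intro x hx hx'
  rw [Metric.mem_closedBall, dist_eq_norm] at hx hx'
  have : ‖rep p n k c - rep p n k c'‖ ≤ (p:ℝ)^k := by
    have : rep p n k c - rep p n k c' = (rep p n k c - x) + (x - rep p n k c') := by ring
    rw [this]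
    refine le_trans (E_nonarch _ _) (max_le ?_ hx')
    rw [← norm_neg]; simpa using hx
  have hk := le_trans (norm_rep_sub hcc) this
  have : (p:ℝ)^(k:ℤ) < (p:ℝ)^(k+1) := zpow_lt_zpow_right₀ p_one_lt (by omega)
  linarith

variable [MeasurableSpace ℚ_[p]] [BorelSpace ℚ_[p]]
variable {μ : Measure (Fin n → ℚ_[p])} [μ.IsAddHaarMeasure]

lemma measure_closedBall_eq (a : Fin n → ℚ_[p]) (r : ℝ) :
    μ (Metric.closedBall a r) = μ (Metric.closedBall 0 r) := by
  have : Metric.closedBall a r = (fun x => (-a) + x) ⁻¹' Metric.closedBall 0 r := by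
    ext x
    simp [Metric.mem_closedBall, dist_eq_norm, add_comm, sub_eq_neg_add]
  rw [this, measure_preimage_add]

lemma measure_Bz_succ (k : ℤ) : μ (Bz p n (k+1)) = (p:ℝ≥0∞)^n * μ (Bz p n k) := by
  rw [Bz_succ_eq_iUnion k,
    measure_iUnion (Bz_succ_disjoint k) (fun c => measurableSet_closedBall)]
  have : ∀ c : Fin n → Fin p, μ (Metric.closedBall (rep p n k c) ((p:ℝ)^k)) = μ (Bz p n k) :=
    fun c => measure_closedBall_eq _ _
  rw [tsum_congr this, tsum_fintype]
  rw [Finset.sum_const, Finset.card_univ]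
  have hcard : Fintype.card (Fin n → Fin p) = p ^ n := by
    rw [Fintype.card_fun]; simp
  rw [hcard, nsmul_eq_mul]
  push_cast
  ring

lemma measure_Bz (hμ : μ (Metric.closedBall 0 1) = 1) (k : ℤ) :
    μ (Bz p n k) = ENNReal.ofReal ((p:ℝ)^((n:ℤ) * k)) := by
  have hpow : ∀ j : ℤ, (p:ℝ≥0∞)^n * ENNReal.ofReal ((p:ℝ)^((n:ℤ) * j))
      = ENNReal.ofReal ((p:ℝ)^((n:ℤ) * (j+1))) := by
    intro j
    have h1 : ((p:ℝ≥0∞))^n = ENNReal.ofReal ((p:ℝ)^(n:ℕ)) := by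
      rw [ENNReal.ofReal_pow (le_of_lt p_pos), ENNReal.ofReal_natCast]
    rw [h1, ← ENNReal.ofReal_mul (by positivity)]
    congr 1
    rw [← zpow_natCast (p:ℝ) n, ← zpow_add₀ (ne_of_gt p_pos)]
    congr 1
    ring
  induction k using Int.induction_on with
  | zero =>
    have : Bz p n 0 = Metric.closedBall 0 1 := by rw [Bz]; norm_num
    rw [this, hμ]
    simp
  | succ k ih =>
    rw [measure_Bz_succ, ih, hpow]
  | pred k ih =>
    have hne0 : ((p:ℝ≥0∞))^n ≠ 0 := by
      apply pow_ne_zero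
      exact_mod_cast Nat.Prime.ne_zero (Fact.out (p := p.Prime))
    have hnetop : ((p:ℝ≥0∞))^n ≠ ⊤ := ENNReal.pow_ne_top (ENNReal.natCast_ne_top p)
    have hstep := measure_Bz_succ (μ := μ) (k := -(k:ℤ)-1)
    have heq : (-(k:ℤ)-1) + 1 = -k := by ring
    rw [heq, ih] at hstep
    apply (ENNReal.mul_right_inj hne0 hnetop).1
    rw [← hstep, hpow (-(k:ℤ)-1), heq]

lemma measure_Bz_toReal (hμ : μ (Metric.closedBall 0 1) = 1) (k : ℤ) :
    (μ (Bz p n k)).toReal = (p:ℝ)^((n:ℤ) * k) := by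
  rw [measure_Bz hμ, ENNReal.toReal_ofReal (zpow_nonneg (le_of_lt p_pos) _)]

lemma measure_Bz_ne_top (k : ℤ) : μ (Bz p n k) ≠ ⊤ := (Bz_compact k).measure_lt_top.ne

end Meas

namespace ClaimA
open Stmt6
variable {p : ℕ} [Fact p.Prime] {n : ℕ}

lemma phi_continuous {φ : (Fin n → ℚ_[p]) → ℂ} (hφ : φ ∈ Cminus p n) : Continuous φ := by
  obtain ⟨⟨h0, hlc, _⟩, ε, hε, hsupp⟩ := hφ
  rw [continuous_iff_continuousAt]
  intro ξ
  by_cases hξ : ξ = 0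
  · subst hξ
    apply ContinuousAt.congr (continuousAt_const (y := φ 0))
    filter_upwards [Metric.ball_mem_nhds (0 : Fin n → ℚ_[p]) hε] with η hη
    rw [h0]
    exact (hsupp η (by simpa [dist_zero_right] using hη)).symm
  · obtain ⟨U, hU, hUc⟩ := hlc ξ hξ
    apply ContinuousAt.congr (continuousAt_const (y := φ ξ))
    filter_upwards [hU] with η hη
    exact (hUc η hη).symm

lemma locConst_ball {φ : (Fin n → ℚ_[p]) → ℂ} (hφ : φ ∈ Cminus p n)
    {ξ : Fin n → ℚ_[p]} (hξ : ξ ≠ 0) :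
    ∃ δ > 0, ∀ η, ‖η - ξ‖ ≤ δ → φ η = φ ξ := by
  obtain ⟨U, hU, hUc⟩ := hφ.1.2.1 ξ hξ
  obtain ⟨δ, hδ, hball⟩ := Metric.mem_nhds_iff.1 hU
  refine ⟨δ/2, by linarith, fun η hη => hUc η (hball ?_)⟩
  rw [Metric.mem_ball, dist_eq_norm]
  linarith

lemma norm_sum_le_padic {ι : Type*} (s : Finset ι) (f : ι → ℚ_[p]) {C : ℝ} (hC : 0 ≤ C)
    (h : ∀ i ∈ s, ‖f i‖ ≤ C) : ‖∑ i ∈ s, f i‖ ≤ C := by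
  classical
  induction s using Finset.induction with
  | empty => simpa using hC
  | insert _ _ hi ih =>
    rename_i a s
    rw [Finset.sum_insert hi]
    refine le_trans (Padic.nonarchimedean _ _) (max_le (h a (by simp)) ?_)
    exact ih (fun i his => h i (Finset.mem_insert_of_mem his))

lemma exists_separating (V : Submodule ℂ ((Fin n → ℚ_[p]) → ℂ)) (hfd : FiniteDimensional ℂ ↥V)
    (hV0 : ∀ w ∈ V, w 0 = 0) :
    ∃ T : Finset (Fin n → ℚ_[p]), ((0 : Fin n → ℚ_[p]) ∉ T) ∧
      ∀ w ∈ V, (∀ η ∈ T, w η = 0) → w = 0 := by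
  classical
  set KT : Finset (Fin n → ℚ_[p]) → Submodule ℂ ((Fin n → ℚ_[p]) → ℂ) :=
    fun T => V ⊓ ⨅ η ∈ T,
      LinearMap.ker (LinearMap.proj (R := ℂ) (φ := fun _ : Fin n → ℚ_[p] => ℂ) η) with hKT
  have hKTle : ∀ T, KT T ≤ V := fun T => inf_le_left
  have hfdKT : ∀ T, FiniteDimensional ℂ ↥(KT T) :=
    fun T => Submodule.finiteDimensional_of_le (hKTle T)
  have hmemKT : ∀ T w, w ∈ KT T ↔ (w ∈ V ∧ ∀ η ∈ T, w η = 0) := by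
    intro T w
    rw [hKT]
    simp [Submodule.mem_inf, Submodule.mem_iInf, LinearMap.mem_ker]
  have main : ∀ (m : ℕ) (T : Finset (Fin n → ℚ_[p])), (0 : Fin n → ℚ_[p]) ∉ T →
      Module.finrank ℂ ↥(KT T) ≤ m →
      ∃ T' : Finset (Fin n → ℚ_[p]), ((0 : Fin n → ℚ_[p]) ∉ T') ∧
        ∀ w ∈ V, (∀ η ∈ T', w η = 0) → w = 0 := by
    intro m
    induction m with
    | zero =>
      intro T hT hrank
      have hbot : KT T = ⊥ := by
        haveI := hfdKT T
        exact Submodule.finrank_eq_zero.1 (Nat.le_zero.1 hrank)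
      refine ⟨T, hT, fun w hw hvals => ?_⟩
      have hmem := (hmemKT T w).2 ⟨hw, hvals⟩
      rw [hbot] at hmem
      exact (Submodule.mem_bot ℂ).1 hmem
    | succ m ih =>
      intro T hT hrank
      by_cases hbot : KT T = ⊥
      · refine ⟨T, hT, fun w hw hvals => ?_⟩
        have hmem := (hmemKT T w).2 ⟨hw, hvals⟩
        rw [hbot] at hmem
        exact (Submodule.mem_bot ℂ).1 hmem
      · obtain ⟨w, hwK, hw0⟩ := (Submodule.ne_bot_iff _).1 hbot
        obtain ⟨η, hη⟩ := Function.ne_iff.1 hw0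
        have hwV : w ∈ V := (hKTle T) hwK
        have hη0 : η ≠ 0 := by
          intro h
          subst h
          exact hη (by simpa using hV0 w hwV)
        have hηT : η ∉ T := by
          intro hmem
          exact hη (by simpa using ((hmemKT T w).1 hwK).2 η hmem)
        have hlt : KT (insert η T) < KT T := by
          rw [SetLike.lt_iff_le_and_exists]
          constructor
          · intro v hv
            rw [hmemKT] at hv ⊢
            exact ⟨hv.1, fun η' hη' => hv.2 η' (Finset.mem_insert_of_mem hη')⟩
          · refine ⟨w, hwK, fun hmem => ?_⟩
            exact hη (by simpa using ((hmemKT _ w).1 hmem).2 η (Finset.mem_insert_self η T))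
        haveI := hfdKT T
        have hfr := Submodule.finrank_lt_finrank_of_lt hlt
        refine ih (insert η T) ?_ (by omega)
        simp only [Finset.mem_insert]
        push_neg
        exact ⟨fun h => hη0 h.symm, hT⟩
  exact main (Module.finrank ℂ ↥(KT ∅)) ∅ (Finset.notMem_empty 0) le_rfl

lemma glAct_one (ξ : Fin n → ℚ_[p]) : glAct p n 1 ξ = ξ := by
  have : (Matrix.of fun i j => (((1 : GL (Fin n) ℤ_[p]) : Matrix (Fin n) (Fin n) ℤ_[p]) i j : ℚ_[p]))
      = (1 : Matrix (Fin n) (Fin n) ℚ_[p]) := by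
    ext i j
    simp only [Matrix.of_apply, Units.val_one, Matrix.one_apply]
    split <;> simp
  rw [glAct, this, Matrix.one_mulVec]

lemma glAct_zero (g : GL (Fin n) ℤ_[p]) : glAct p n g 0 = 0 := by
  rw [glAct, Matrix.mulVec_zero]

lemma glAct_sub_norm {δ : ℝ} (hδ : 0 ≤ δ) (g : GL (Fin n) ℤ_[p])
    (hg : ∀ i j, ‖(((g : Matrix (Fin n) (Fin n) ℤ_[p]) i j : ℚ_[p]) -
      if i = j then 1 else 0)‖ ≤ δ)
    (ξ : Fin n → ℚ_[p]) : ‖glAct p n g ξ - ξ‖ ≤ δ * ‖ξ‖ := by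
  rw [pi_norm_le_iff_of_nonneg (mul_nonneg hδ (norm_nonneg ξ))]
  intro j
  have hco : (glAct p n g ξ - ξ) j
      = ∑ l, ((((g : Matrix (Fin n) (Fin n) ℤ_[p]) j l : ℚ_[p]) - if j = l then 1 else 0) * ξ l) := by
    simp only [Pi.sub_apply, glAct, Matrix.mulVec, dotProduct, Matrix.of_apply]
    rw [Finset.sum_congr rfl (fun l _ => sub_mul _ _ (ξ l)), Finset.sum_sub_distrib]
    congr 1
    rw [Finset.sum_eq_single j]
    · simp
    · intro b _ hb; simp [Ne.symm hb]
    · simp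
  rw [hco]
  apply norm_sum_le_padic _ _ (mul_nonneg hδ (norm_nonneg ξ))
  intro l _
  rw [norm_mul]
  exact mul_le_mul (hg j l) (norm_le_pi_norm ξ l) (norm_nonneg _) hδ

lemma claimA' {φ : (Fin n → ℚ_[p]) → ℂ} (hφ : φ ∈ Cminus p n) :
    ∃ m : ℕ, 1 ≤ m ∧ ∀ g : GL (Fin n) ℤ_[p],
      (∀ i j, ‖(((g : Matrix (Fin n) (Fin n) ℤ_[p]) i j : ℚ_[p]) -
        if i = j then 1 else 0)‖ ≤ (p:ℝ)^(-(m:ℤ))) →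
      ∀ ξ, φ (glAct p n g ξ) = φ ξ := by
  classical
  set V := Submodule.span ℂ
      (Set.range fun g : GL (Fin n) ℤ_[p] =>
        fun ξ : Fin n → ℚ_[p] => φ (glAct p n g⁻¹ ξ)) with hV
  haveI hfd : FiniteDimensional ℂ ↥V := hφ.1.2.2
  have hφ0 : φ 0 = 0 := hφ.1.1
  have hV0 : ∀ w ∈ V, w 0 = 0 := by
    intro w hw
    induction hw using Submodule.span_induction with
    | mem x hx =>
      obtain ⟨g, rfl⟩ := hx
      simp only []
      rw [glAct_zero, hφ0]
    | zero => rfl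
    | add x y hx hy ihx ihy => simp [ihx, ihy]
    | smul a x hx ihx => simp [ihx]
  obtain ⟨T, hT0, hTsep⟩ := exists_separating V hfd hV0
  -- a uniform relative constancy radius on T
  have hunif0 : ∀ S : Finset (Fin n → ℚ_[p]), (∀ η ∈ S, η ≠ 0) →
      ∃ c > (0:ℝ), ∀ η ∈ S, ∀ η', ‖η' - η‖ ≤ c * ‖η‖ → φ η' = φ η := by
    intro S
    induction S using Finset.induction with
    | empty => exact fun _ => ⟨1, one_pos, by simp⟩
    | insert _ _ hmem ihT =>
      rename_i η T
      intro hS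
      have hη0 : η ≠ 0 := hS η (Finset.mem_insert_self η T)
      obtain ⟨c, hc, hcT⟩ := ihT (fun η' hη' => hS η' (Finset.mem_insert_of_mem hη'))
      obtain ⟨δ, hδ, hδc⟩ := locConst_ball hφ hη0
      have hnη : (0:ℝ) < ‖η‖ := norm_pos_iff.2 hη0
      refine ⟨min c (δ / ‖η‖), lt_min hc (div_pos hδ hnη), ?_⟩
      intro η'' hη'' ζ hζ
      rcases Finset.mem_insert.1 hη'' with h | h
      · subst h
        apply hδc
        calc ‖ζ - η''‖ ≤ min c (δ / ‖η''‖) * ‖η''‖ := hζ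
          _ ≤ (δ / ‖η''‖) * ‖η''‖ := by
              apply mul_le_mul_of_nonneg_right (min_le_right _ _) (norm_nonneg _)
          _ = δ := by field_simp
      · apply hcT η'' h
        calc ‖ζ - η''‖ ≤ min c (δ / ‖η‖) * ‖η''‖ := hζ
          _ ≤ c * ‖η''‖ := mul_le_mul_of_nonneg_right (min_le_left _ _) (norm_nonneg _)
  have hunif := hunif0 T (fun η hη h0 => hT0 (h0 ▸ hη))
  obtain ⟨c, hc, hcT⟩ := hunif
  -- choose m with p^(-m) ≤ c and 1 ≤ m
  have hm : ∃ m : ℕ, 1 ≤ m ∧ (p:ℝ)^(-(m:ℤ)) ≤ c := by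
    obtain ⟨m₀, hm₀⟩ := exists_pow_lt_of_lt_one hc
      (show (p:ℝ)⁻¹ < 1 by rw [inv_lt_one_iff₀]; right; exact p_one_lt)
    refine ⟨max m₀ 1, le_max_right _ _, ?_⟩
    have h1 : (p:ℝ)^(-(max m₀ 1 : ℕ) : ℤ) = ((p:ℝ)⁻¹)^(max m₀ 1 : ℕ) := by
      rw [zpow_neg, ← inv_zpow, zpow_natCast]
    rw [h1]
    calc ((p:ℝ)⁻¹)^(max m₀ 1 : ℕ) ≤ ((p:ℝ)⁻¹)^(m₀ : ℕ) := by
          apply pow_le_pow_of_le_one (by positivity)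
            (le_of_lt (by rw [inv_lt_one_iff₀]; right; exact p_one_lt)) (le_max_left _ _)
      _ ≤ c := le_of_lt hm₀
  obtain ⟨m, hm1, hmc⟩ := hm
  refine ⟨m, hm1, fun g hg ξ => ?_⟩
  -- the translated function is in V
  have hwV : (fun ξ => φ (glAct p n g ξ)) ∈ V := by
    rw [hV]
    apply Submodule.subset_span
    exact ⟨g⁻¹, by funext ζ; simp only []; rw [inv_inv]⟩
  have hφV : φ ∈ V := by
    rw [hV]
    apply Submodule.subset_span
    have h1 : (fun ξ : Fin n → ℚ_[p] => φ (glAct p n (1 : GL (Fin n) ℤ_[p])⁻¹ ξ)) = φ :=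
      funext fun ζ => by rw [inv_one, glAct_one]
    exact ⟨1, h1⟩
  have hdiff : (fun ξ => φ (glAct p n g ξ)) - φ ∈ V := Submodule.sub_mem V hwV hφV
  have hvals : ∀ η ∈ T, ((fun ξ => φ (glAct p n g ξ)) - φ) η = 0 := by
    intro η hη
    have hη0 : η ≠ 0 := by intro h; exact hT0 (h ▸ hη)
    have hb := glAct_sub_norm (zpow_nonneg (le_of_lt p_pos) _) g hg η
    have : φ (glAct p n g η) = φ η := by
      have heq : glAct p n g η = η + (glAct p n g η - η) := by ring
      apply hcT η hη
      calc ‖glAct p n g η - η‖ ≤ (p:ℝ)^(-(m:ℤ)) * ‖η‖ := hb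
        _ ≤ c * ‖η‖ := mul_le_mul_of_nonneg_right hmc (norm_nonneg _)
    simp [this]
  have := hTsep _ hdiff hvals
  have happ := congrFun this ξ
  simpa [sub_eq_zero] using happ

end ClaimA

namespace ClaimA2
open Stmt6 ClaimA
variable {p : ℕ} [Fact p.Prime] {n : ℕ}

lemma claimA {φ : (Fin n → ℚ_[p]) → ℂ} (hφ : φ ∈ Cminus p n) (hn : 0 < n) :
    ∃ m : ℕ, 1 ≤ m ∧ ∀ ξ η : Fin n → ℚ_[p], ξ ≠ 0 →
      ‖η‖ ≤ (p:ℝ)^(-(m:ℤ)) * ‖ξ‖ → φ (ξ + η) = φ ξ := by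
  classical
  obtain ⟨m, hm1, hA⟩ := claimA' hφ
  refine ⟨m, hm1, fun ξ η hξ hη => ?_⟩
  obtain ⟨i, hi⟩ := E_exists_max hn ξ
  have hξn : (0:ℝ) < ‖ξ‖ := norm_pos_iff.2 hξ
  have hξi : ξ i ≠ 0 := by
    intro h
    rw [h, norm_zero] at hi
    exact (ne_of_gt hξn) hi
  have hmle1 : (p:ℝ)^(-(m:ℤ)) ≤ 1 := by
    calc (p:ℝ)^(-(m:ℤ)) ≤ (p:ℝ)^(0:ℤ) :=
          zpow_le_zpow_right₀ (le_of_lt p_one_lt) (by omega)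
      _ = 1 := zpow_zero _
  have ha : ∀ j, ‖η j / ξ i‖ ≤ (p:ℝ)^(-(m:ℤ)) := by
    intro j
    rw [norm_div, div_le_iff₀ (by rw [← hi]; exact hξn)]
    calc ‖η j‖ ≤ ‖η‖ := norm_le_pi_norm η j
      _ ≤ (p:ℝ)^(-(m:ℤ)) * ‖ξ‖ := hη
      _ = (p:ℝ)^(-(m:ℤ)) * ‖ξ i‖ := by rw [hi]
  have ha1 : ∀ j, ‖η j / ξ i‖ ≤ 1 := fun j => le_trans (ha j) hmle1
  set A : Matrix (Fin n) (Fin n) ℤ_[p] :=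
    Matrix.of (fun j l => if l = i then (⟨η j / ξ i, ha1 j⟩ : ℤ_[p]) else 0) with hAdef
  set c : ℤ_[p] := (⟨η i / ξ i, ha1 i⟩ : ℤ_[p]) with hcdef
  have hAA : A * A = c • A := by
    ext j l
    rw [Matrix.mul_apply, Matrix.smul_apply, smul_eq_mul]
    rw [Finset.sum_eq_single i]
    · by_cases hl : l = i
      · rw [hl]
        have h1 : A i i = c := by rw [hAdef, hcdef]; simp; rfl
        rw [h1, mul_comm]
      · have h2 : A i l = 0 := by rw [hAdef]; simp [hl]
        have h3 : A j l = 0 := by rw [hAdef]; simp [hl]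
        rw [h2, h3, mul_zero, mul_zero]
    · intro b _ hb
      have h2 : A j b = 0 := by rw [hAdef]; simp [hb]
      rw [h2, zero_mul]
    · simp
  have hcn : ‖c‖ < 1 := by
    have h1 : ‖c‖ ≤ (p:ℝ)^(-(m:ℤ)) := by
      rw [PadicInt.norm_def]
      exact ha i
    have h2 : (p:ℝ)^(-(m:ℤ)) < 1 := by
      calc (p:ℝ)^(-(m:ℤ)) < (p:ℝ)^(0:ℤ) :=
            zpow_lt_zpow_right₀ p_one_lt (by omega)
        _ = 1 := zpow_zero _
    linarith
  have hu : IsUnit ((1 + c) : ℤ_[p]) := by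
    rw [PadicInt.isUnit_iff]
    have hle : ‖(1 + c : ℤ_[p])‖ ≤ 1 := PadicInt.norm_le_one _
    have hge : (1:ℝ) ≤ ‖(1 + c : ℤ_[p])‖ := by
      by_contra hlt
      push_neg at hlt
      have h3 : ‖(1 : ℤ_[p])‖ ≤ max ‖(1 + c : ℤ_[p])‖ ‖(-c : ℤ_[p])‖ := by
        have := PadicInt.nonarchimedean (1 + c) (-c)
        simpa using this
      rw [norm_one, norm_neg] at h3
      have : max ‖(1 + c : ℤ_[p])‖ ‖c‖ < 1 := max_lt hlt hcn
      linarith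
    linarith
  obtain ⟨v, hv⟩ := hu
  set b : ℤ_[p] := ↑v⁻¹ with hbdef
  have hb : b * (1 + c) = 1 := by rw [hbdef, ← hv]; exact v.inv_mul
  have hscal : (1 : ℤ_[p]) - b - b * c = 0 := by
    have : (1:ℤ_[p]) - b - b * c = 1 - b * (1 + c) := by ring
    rw [this, hb, sub_self]
  have hright : (1 + A) * (1 - b • A) = 1 := by
    set B : Matrix (Fin n) (Fin n) ℤ_[p] := b • A with hBdef
    have hABe : A * B = (b * c) • A := by
      rw [hBdef, Matrix.mul_smul, hAA, smul_smul]
    have hzero : A - b • A - (b * c) • A = 0 := by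
      have e : A - b • A - (b * c) • A = (1 - b - b * c) • A := by
        rw [sub_smul, sub_smul, one_smul]
      rw [e, hscal, zero_smul]
    calc (1 + A) * (1 - B) = 1 - B + A - A * B := by noncomm_ring
      _ = 1 - b • A + A - (b * c) • A := by rw [hABe, hBdef]
      _ = 1 + (A - b • A - (b * c) • A) := by abel
      _ = 1 := by rw [hzero, add_zero]
  have hleft : (1 - b • A) * (1 + A) = 1 := by
    rw [mul_eq_one_comm]
    exact hright
  set g : GL (Fin n) ℤ_[p] := ⟨1 + A, 1 - b • A, hright, hleft⟩ with hgdef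
  have hgmat : (g : Matrix (Fin n) (Fin n) ℤ_[p]) = 1 + A := rfl
  have hent : ∀ j l, ‖(((g : Matrix (Fin n) (Fin n) ℤ_[p]) j l : ℚ_[p]) -
      if j = l then 1 else 0)‖ ≤ (p:ℝ)^(-(m:ℤ)) := by
    intro j l
    rw [hgmat]
    have : (((1 + A : Matrix (Fin n) (Fin n) ℤ_[p]) j l : ℚ_[p]) -
        if j = l then 1 else 0) = ((A j l : ℤ_[p]) : ℚ_[p]) := by
      rw [Matrix.add_apply, Matrix.one_apply]
      split <;> push_cast <;> ring
    rw [this]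
    by_cases hl : l = i
    · rw [hAdef]
      simp only [Matrix.of_apply, hl, eq_self_iff_true, if_true]
      exact ha j
    · rw [hAdef]
      simp only [Matrix.of_apply, if_neg hl]
      simp [hl, zpow_nonneg (le_of_lt (p_pos (p := p)))]
  have hact : glAct p n g ξ = ξ + η := by
    funext j
    rw [glAct, hgmat]
    simp only [Matrix.mulVec, dotProduct, Matrix.of_apply, Pi.add_apply]
    have : ∀ l, (((1 + A : Matrix (Fin n) (Fin n) ℤ_[p]) j l : ℚ_[p])) * ξ l
        = ((1 : Matrix (Fin n) (Fin n) ℤ_[p]) j l : ℚ_[p]) * ξ l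
          + ((A j l : ℤ_[p]) : ℚ_[p]) * ξ l := by
      intro l
      rw [Matrix.add_apply]
      push_cast
      ring
    rw [Finset.sum_congr rfl (fun l _ => this l), Finset.sum_add_distrib]
    congr 1
    · rw [Finset.sum_eq_single j]
      · simp
      · intro b _ hb
        rw [Matrix.one_apply_ne (Ne.symm hb)]
        simp
      · simp
    · rw [Finset.sum_eq_single i]
      · rw [hAdef]
        simp only [Matrix.of_apply, if_pos rfl]
        exact div_mul_cancel₀ (η j) hξi
      · intro b _ hb
        rw [hAdef]
        simp [hb]
      · simp
  rw [← hact, hA g hent ξ]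

end ClaimA2

namespace Osc
open Stmt6 Meas ClaimA ClaimA2
variable {p : ℕ} [Fact p.Prime] {n : ℕ}

def Sh (p : ℕ) [Fact p.Prime] (n : ℕ) (k : ℤ) : Set (Fin n → ℚ_[p]) :=
  Bz p n k \ Bz p n (k-1)

lemma Sh_norm {k : ℤ} {ξ : Fin n → ℚ_[p]} (hn : 0 < n) (hξ : ξ ∈ Sh p n k) :
    ‖ξ‖ = (p:ℝ)^k := by
  obtain ⟨h1, h2⟩ := hξ
  rw [mem_Bz] at h1
  have h2' : (p:ℝ)^(k-1) < ‖ξ‖ := lt_of_not_ge (fun h => h2 (mem_Bz.2 h))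
  have hξ0 : ξ ≠ 0 := by
    intro h
    rw [h, norm_zero] at h2'
    exact absurd h2' (not_lt.2 (zpow_nonneg (le_of_lt p_pos) _))
  have := zpow_lt_succ (E_norm_eq_zpow hn hξ0) h2'
  rw [show (k-1) + 1 = k by ring] at this
  linarith

lemma zpow_mul_zpow_neg (k : ℤ) : (p:ℝ)^k * (p:ℝ)^(-k) = 1 := by
  rw [← zpow_add₀ (ne_of_gt p_pos), add_neg_cancel, zpow_zero]

variable [MeasurableSpace ℚ_[p]] [BorelSpace ℚ_[p]]
variable {μ : Measure (Fin n → ℚ_[p])} [μ.IsAddHaarMeasure]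

lemma Sh_measurable (k : ℤ) : MeasurableSet (Sh p n k) :=
  (Bz_measurable k).diff (Bz_measurable (k-1))

lemma osc (hn : 0 < n) {ψ : ℚ_[p] → ℂ} {φ : (Fin n → ℚ_[p]) → ℂ}
    (hψ : IsStdAddChar p ψ)
    {m : ℕ} (hm1 : 1 ≤ m)
    (hm : ∀ ξ η : Fin n → ℚ_[p], ξ ≠ 0 → ‖η‖ ≤ (p:ℝ)^(-(m:ℤ)) * ‖ξ‖ → φ (ξ + η) = φ ξ)
    (x : Fin n → ℚ_[p]) (k : ℤ)
    (hk : (p:ℝ)^((m:ℤ)+1) ≤ (p:ℝ)^k * ‖x‖) :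
    ∫ ξ in Sh p n k, ψ (∑ i, ξ i * x i) * φ ξ ∂μ = 0 := by
  have hx0 : (0:ℝ) < ‖x‖ := by
    rcases lt_or_ge 0 ‖x‖ with h | h
    · exact h
    · exfalso
      have hx' : ‖x‖ = 0 := le_antisymm h (norm_nonneg x)
      rw [hx', mul_zero] at hk
      exact absurd (lt_of_lt_of_le (zpow_pos p_pos _) hk) (lt_irrefl 0)
  have hx : x ≠ 0 := fun h => by rw [h, norm_zero] at hx0; exact lt_irrefl 0 hx0
  -- lower bound for ‖x‖
  have hxlb : (p:ℝ)^((m:ℤ)+1) * (p:ℝ)^(-k) ≤ ‖x‖ := by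
    have h1 := mul_le_mul_of_nonneg_right hk (zpow_nonneg (le_of_lt (p_pos (p:=p))) (-k))
    have h2 : ((p:ℝ)^k * ‖x‖) * (p:ℝ)^(-k) = ‖x‖ := by
      rw [mul_comm ((p:ℝ)^k) ‖x‖, mul_assoc, zpow_mul_zpow_neg, mul_one]
    linarith
  obtain ⟨i, hi⟩ := E_exists_max hn x
  have hxi : x i ≠ 0 := by
    intro h
    rw [h, norm_zero] at hi
    exact (ne_of_gt hx0) hi
  obtain ⟨y, hy, hy1⟩ := hψ.2.2.2
  set t : ℚ_[p] := y / x i with ht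
  set η₀ : Fin n → ℚ_[p] := Pi.single i t with hη₀def
  have hnt : ‖t‖ = (p:ℝ) * ‖x‖⁻¹ := by rw [ht, norm_div, hy, hi]; ring
  have htle : ‖t‖ ≤ (p:ℝ)^(k-(m:ℤ)) := by
    rw [hnt]
    have h1 : ‖x‖⁻¹ ≤ ((p:ℝ)^((m:ℤ)+1) * (p:ℝ)^(-k))⁻¹ :=
      inv_anti₀ (mul_pos (zpow_pos p_pos _) (zpow_pos p_pos _)) hxlb
    calc (p:ℝ) * ‖x‖⁻¹ ≤ (p:ℝ) * ((p:ℝ)^((m:ℤ)+1) * (p:ℝ)^(-k))⁻¹ :=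
          mul_le_mul_of_nonneg_left h1 (le_of_lt p_pos)
      _ = (p:ℝ)^(1:ℤ) * ((p:ℝ)^(-((m:ℤ)+1)) * (p:ℝ)^(k:ℤ)) := by
          rw [mul_inv, ← zpow_neg, ← zpow_neg, neg_neg, zpow_one]
      _ = (p:ℝ)^(1 + (-((m:ℤ)+1) + k)) := by
          rw [← zpow_add₀ (ne_of_gt (p_pos (p:=p))), ← zpow_add₀ (ne_of_gt (p_pos (p:=p)))]
      _ = (p:ℝ)^(k-(m:ℤ)) := by congr 1; ring
  have hη₀le : ∀ j : ℤ, (k-(m:ℤ)) ≤ j → ‖η₀‖ ≤ (p:ℝ)^j := by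
    intro j hj
    rw [pi_norm_le_iff_of_nonneg (zpow_nonneg (le_of_lt p_pos) _)]
    intro l
    by_cases hl : l = i
    · subst hl
      rw [hη₀def]
      simp only [Pi.single_eq_same]
      exact le_trans htle (zpow_le_zpow_right₀ (le_of_lt p_one_lt) hj)
    · rw [hη₀def]
      simp [Pi.single_eq_of_ne hl, zpow_nonneg (le_of_lt (p_pos (p:=p)))]
  -- shell is invariant under translation by η₀
  have hinv : (fun ξ => η₀ + ξ) ⁻¹' (Sh p n k) = Sh p n k := by
    rw [Sh, Set.preimage_diff,
      Bz_add_invariant (hη₀le k (by omega)),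
      Bz_add_invariant (hη₀le (k-1) (by omega))]
  have hdot : ∑ j, η₀ j * x j = y := by
    rw [hη₀def, dot_single, ht, div_mul_cancel₀ _ hxi]
  have key : ∫ ξ in Sh p n k, ψ (∑ i, ξ i * x i) * φ ξ ∂μ
      = ψ y * ∫ ξ in Sh p n k, ψ (∑ i, ξ i * x i) * φ ξ ∂μ := by
    conv_lhs => rw [← setIntegral_add_invariant hinv (fun ξ => ψ (∑ i, ξ i * x i) * φ ξ)]
    rw [← MeasureTheory.integral_const_mul]
    apply setIntegral_congr_fun (Sh_measurable k)
    intro ξ hξ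
    simp only []
    have hφeq : φ (η₀ + ξ) = φ ξ := by
      rw [add_comm]
      apply hm ξ η₀
      · intro h
        have := Sh_norm hn hξ
        rw [h, norm_zero] at this
        exact absurd this.symm (ne_of_gt (zpow_pos p_pos _))
      · rw [Sh_norm hn hξ]
        calc ‖η₀‖ ≤ (p:ℝ)^(k-(m:ℤ)) := hη₀le _ le_rfl
          _ = (p:ℝ)^(-(m:ℤ)) * (p:ℝ)^k := by
              rw [← zpow_add₀ (ne_of_gt (p_pos (p:=p)))]; congr 1; ring
    have hdd : ∑ j, (η₀ + ξ) j * x j = y + ∑ j, ξ j * x j := by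
      rw [dot_add_left, hdot]
    rw [hdd, hψ.1, hφeq, mul_assoc]
  have h2 : (ψ y - 1) * ∫ ξ in Sh p n k, ψ (∑ i, ξ i * x i) * φ ξ ∂μ = 0 := by
    rw [sub_mul, one_mul, ← key, sub_self]
  rcases mul_eq_zero.1 h2 with h | h
  · exact absurd (sub_eq_zero.1 h) hy1
  · exact h

/-- partial Fourier integral -/
def G (p : ℕ) [Fact p.Prime] (n : ℕ) [MeasurableSpace ℚ_[p]] [BorelSpace ℚ_[p]]
    (μ : Measure (Fin n → ℚ_[p])) (ψ : ℚ_[p] → ℂ) (φ : (Fin n → ℚ_[p]) → ℂ)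
    (k : ℤ) (x : Fin n → ℚ_[p]) : ℂ :=
  ∫ ξ in Bz p n k, ψ (∑ i, ξ i * x i) * φ ξ ∂μ

lemma integrableOn_char_phi {ψ : ℚ_[p] → ℂ} {φ : (Fin n → ℚ_[p]) → ℂ}
    (hψc : Continuous ψ) (hφc : Continuous φ) (x : Fin n → ℚ_[p])
    {s : Set (Fin n → ℚ_[p])} (hs : IsCompact s) :
    IntegrableOn (fun ξ => ψ (∑ i, ξ i * x i) * φ ξ) s μ := by
  apply ContinuousOn.integrableOn_compact hs
  apply Continuous.continuousOn
  apply Continuous.mul _ hφc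
  apply hψc.comp
  exact continuous_finset_sum _ (fun i _ => (continuous_apply i).mul continuous_const)

lemma G_succ {ψ : ℚ_[p] → ℂ} {φ : (Fin n → ℚ_[p]) → ℂ}
    (hψc : Continuous ψ) (hφc : Continuous φ) (k : ℤ) (x : Fin n → ℚ_[p]) :
    G p n μ ψ φ k x = G p n μ ψ φ (k-1) x + ∫ ξ in Sh p n k, ψ (∑ i, ξ i * x i) * φ ξ ∂μ := by
  rw [G, G]
  have hsplit : Bz p n k = Bz p n (k-1) ∪ Sh p n k :=
    (Set.union_diff_cancel (Bz_mono (by omega))).symm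
  rw [hsplit]
  apply setIntegral_union Set.disjoint_sdiff_right (Sh_measurable k)
  · exact integrableOn_char_phi hψc hφc x (Bz_compact (k-1))
  · exact (integrableOn_char_phi hψc hφc x (Bz_compact k)).mono_set Set.diff_subset

lemma G_stab (hn : 0 < n) {ψ : ℚ_[p] → ℂ} {φ : (Fin n → ℚ_[p]) → ℂ}
    (hψ : IsStdAddChar p ψ) (hψc : Continuous ψ) (hφc : Continuous φ)
    {m : ℕ} (hm1 : 1 ≤ m)
    (hm : ∀ ξ η : Fin n → ℚ_[p], ξ ≠ 0 → ‖η‖ ≤ (p:ℝ)^(-(m:ℤ)) * ‖ξ‖ → φ (ξ + η) = φ ξ)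
    (x : Fin n → ℚ_[p]) {j k : ℤ}
    (hcond : (p:ℝ)^((m:ℤ)+1) ≤ (p:ℝ)^(j+1) * ‖x‖) (hjk : j ≤ k) :
    G p n μ ψ φ k x = G p n μ ψ φ j x := by
  obtain ⟨d, rfl⟩ : ∃ d : ℕ, k = j + d := ⟨(k - j).toNat, by omega⟩
  clear hjk
  induction d with
  | zero => norm_num
  | succ d ih =>
    have hcast : (j + ((d:ℕ)+1:ℕ) : ℤ) = (j + (d:ℤ)) + 1 := by push_cast; ring
    rw [hcast]
    have h1 := G_succ (μ := μ) (ψ := ψ) (φ := φ) hψc hφc ((j+(d:ℤ))+1) x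
    rw [show (j + (d:ℤ) + 1) - 1 = j + (d:ℤ) by ring] at h1
    have h2 : ∫ ξ in Sh p n (j+(d:ℤ)+1), ψ (∑ i, ξ i * x i) * φ ξ ∂μ = 0 := by
      apply osc hn hψ hm1 hm x _
      calc (p:ℝ)^((m:ℤ)+1) ≤ (p:ℝ)^(j+1) * ‖x‖ := hcond
        _ ≤ (p:ℝ)^(j+(d:ℤ)+1) * ‖x‖ := by
            apply mul_le_mul_of_nonneg_right _ (norm_nonneg x)
            exact zpow_le_zpow_right₀ (le_of_lt p_one_lt) (by omega)
    rw [h1, h2, add_zero, ih]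

/-- balls as compact open additive subgroups -/
def BzGrp (p : ℕ) [Fact p.Prime] (n : ℕ) (k : ℤ) : AddSubgroup (Fin n → ℚ_[p]) where
  carrier := Bz p n k
  zero_mem' := by rw [mem_Bz, norm_zero]; exact zpow_nonneg (le_of_lt p_pos) _
  add_mem' := by
    intro a b ha hb
    rw [mem_Bz] at ha hb ⊢
    exact le_trans (E_nonarch a b) (max_le ha hb)
  neg_mem' := by
    intro a ha
    rw [mem_Bz] at ha ⊢
    rwa [norm_neg]

lemma BzGrp_coe (k : ℤ) : ((BzGrp p n k : AddSubgroup (Fin n → ℚ_[p])) : Set (Fin n → ℚ_[p]))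
    = Bz p n k := rfl

lemma Bz_isOpen (hn : 0 < n) (k : ℤ) : IsOpen (Bz p n k) := by
  have : Bz p n k = Metric.ball 0 ((p:ℝ)^(k+1)) := by
    ext x
    rw [mem_Bz, Metric.mem_ball, dist_zero_right]
    constructor
    · intro h
      exact lt_of_le_of_lt h (zpow_lt_zpow_right₀ p_one_lt (by omega))
    · intro h
      by_cases hx : x = 0
      · rw [hx, norm_zero]; exact zpow_nonneg (le_of_lt p_pos) _
      · by_contra hc
        push_neg at hc
        have := zpow_lt_succ (E_norm_eq_zpow hn hx) hc
        linarith
  rw [this]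
  exact Metric.isOpen_ball

end Osc

namespace Assemble
open Stmt6 Meas ClaimA ClaimA2 Osc
variable {p : ℕ} [Fact p.Prime] {n : ℕ}
variable [MeasurableSpace ℚ_[p]] [BorelSpace ℚ_[p]]
variable {μ : Measure (Fin n → ℚ_[p])} [μ.IsAddHaarMeasure]

lemma measure_singleton_zero (hn : 0 < n) (hμ : μ (Metric.closedBall 0 1) = 1) :
    μ ({0} : Set (Fin n → ℚ_[p])) = 0 := by
  have h0 : ∀ j : ℕ, μ ({0} : Set (Fin n → ℚ_[p]))
      ≤ ENNReal.ofReal ((p:ℝ)^((n:ℤ) * (-(j:ℤ)))) := by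
    intro j
    rw [← measure_Bz hμ]
    apply measure_mono
    intro x hx
    rw [Set.mem_singleton_iff] at hx
    rw [hx, mem_Bz, norm_zero]
    exact zpow_nonneg (le_of_lt p_pos) _
  by_contra hne
  have hfin : μ ({0} : Set (Fin n → ℚ_[p])) ≠ ⊤ :=
    ne_top_of_le_ne_top ENNReal.ofReal_ne_top (h0 0)
  have hpos : 0 < (μ ({0} : Set (Fin n → ℚ_[p]))).toReal :=
    ENNReal.toReal_pos hne hfin
  obtain ⟨j, hj⟩ := exists_pow_lt_of_lt_one hpos
    (show (p:ℝ)⁻¹ < 1 by rw [inv_lt_one_iff₀]; right; exact p_one_lt)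
  have h1 : (μ ({0} : Set (Fin n → ℚ_[p]))).toReal ≤ (p:ℝ)^((n:ℤ) * (-(j:ℤ))) :=
    ENNReal.toReal_le_of_le_ofReal (zpow_nonneg (le_of_lt p_pos) _) (h0 j)
  have h2 : (p:ℝ)^((n:ℤ) * (-(j:ℤ))) ≤ ((p:ℝ)⁻¹)^j := by
    have : ((p:ℝ)⁻¹)^j = (p:ℝ)^(-(j:ℤ)) := by
      rw [zpow_neg, ← inv_zpow, zpow_natCast]
    rw [this]
    apply zpow_le_zpow_right₀ (le_of_lt p_one_lt)
    have : 1 ≤ (n:ℤ) := by exact_mod_cast hn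
    nlinarith [Int.ofNat_nonneg j]
  linarith

lemma G_locConst {ψ : ℚ_[p] → ℂ} {φ : (Fin n → ℚ_[p]) → ℂ} (hψ : IsStdAddChar p ψ)
    (K : ℤ) {x x' : Fin n → ℚ_[p]} (hxx : ‖x - x'‖ ≤ (p:ℝ)^(-K)) :
    G p n μ ψ φ K x = G p n μ ψ φ K x' := by
  rw [G, G]
  apply setIntegral_congr_fun (Bz_measurable K)
  intro ξ hξ
  simp only []
  have h1 : ∑ i, ξ i * x i = (∑ i, ξ i * x' i) + ∑ i, ξ i * (x - x') i := by
    rw [← Finset.sum_add_distrib]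
    congr 1
    ext i
    simp only [Pi.sub_apply]
    ring
  have h2 : ψ (∑ i, ξ i * (x - x') i) = 1 := by
    apply hψ.2.2.1
    calc ‖∑ i, ξ i * (x - x') i‖ ≤ ‖ξ‖ * ‖x - x'‖ := dot_norm_le _ _
      _ ≤ (p:ℝ)^K * (p:ℝ)^(-K) :=
          mul_le_mul (mem_Bz.1 hξ) hxx (norm_nonneg _) (zpow_nonneg (le_of_lt p_pos) _)
      _ = 1 := zpow_mul_zpow_neg K
  rw [h1, hψ.1, h2, mul_one]

lemma G_continuous {ψ : ℚ_[p] → ℂ} {φ : (Fin n → ℚ_[p]) → ℂ} (hψ : IsStdAddChar p ψ)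
    (K : ℤ) : Continuous (G p n μ ψ φ K) := by
  rw [continuous_iff_continuousAt]
  intro x
  apply ContinuousAt.congr (continuousAt_const (y := G p n μ ψ φ K x))
  filter_upwards [Metric.closedBall_mem_nhds x (zpow_pos (p_pos (p := p)) (-K))] with x' hx'
  apply G_locConst hψ
  rw [← norm_neg]
  simpa [dist_eq_norm, norm_sub_rev] using hx'

lemma G_vanish (hn : 0 < n) {ψ : ℚ_[p] → ℂ} {φ : (Fin n → ℚ_[p]) → ℂ}
    (hψ : IsStdAddChar p ψ) (hψc : Continuous ψ) (hφc : Continuous φ)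
    {ε : ℝ} (hsupp : ∀ ξ : Fin n → ℚ_[p], ‖ξ‖ < ε → φ ξ = 0)
    {s : ℤ} (hs : (p:ℝ)^s < ε)
    {m : ℕ} (hm1 : 1 ≤ m)
    (hm : ∀ ξ η : Fin n → ℚ_[p], ξ ≠ 0 → ‖η‖ ≤ (p:ℝ)^(-(m:ℤ)) * ‖ξ‖ → φ (ξ + η) = φ ξ)
    (K : ℤ) (x : Fin n → ℚ_[p]) (hx : (p:ℝ)^((m:ℤ) - min s K) ≤ ‖x‖) :
    G p n μ ψ φ K x = 0 := by
  set s' : ℤ := min s K with hs'def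
  have hstab : G p n μ ψ φ K x = G p n μ ψ φ s' x := by
    apply G_stab hn hψ hψc hφc hm1 hm x _ (min_le_right s K)
    calc (p:ℝ)^((m:ℤ)+1) = (p:ℝ)^(s'+1) * (p:ℝ)^((m:ℤ) - s') := by
          rw [← zpow_add₀ (ne_of_gt (p_pos (p:=p)))]
          congr 1
          ring
      _ ≤ (p:ℝ)^(s'+1) * ‖x‖ :=
          mul_le_mul_of_nonneg_left hx (zpow_nonneg (le_of_lt p_pos) _)
  rw [hstab, G]
  have : ∀ ξ ∈ Bz p n s', ψ (∑ i, ξ i * x i) * φ ξ = 0 := by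
    intro ξ hξ
    have : φ ξ = 0 := by
      apply hsupp
      calc ‖ξ‖ ≤ (p:ℝ)^s' := mem_Bz.1 hξ
        _ ≤ (p:ℝ)^s := zpow_le_zpow_right₀ (le_of_lt p_one_lt) (min_le_left s K)
        _ < ε := hs
    rw [this, mul_zero]
  rw [setIntegral_congr_fun (Bz_measurable s') this]
  simp

lemma g_repr (hn : 0 < n) {ψ : ℚ_[p] → ℂ} {φ : (Fin n → ℚ_[p]) → ℂ}
    {g : (Fin n → ℚ_[p]) → ℂ}
    (hg : ∀ x : Fin n → ℚ_[p], x ≠ 0 →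
      ∃ Λ₀ : AddSubgroup (Fin n → ℚ_[p]),
        IsCompact (Λ₀ : Set (Fin n → ℚ_[p])) ∧ IsOpen (Λ₀ : Set (Fin n → ℚ_[p])) ∧
        ∀ Λ : AddSubgroup (Fin n → ℚ_[p]),
          IsCompact (Λ : Set (Fin n → ℚ_[p])) → IsOpen (Λ : Set (Fin n → ℚ_[p])) → Λ₀ ≤ Λ →
            g x = ∫ ξ in (Λ : Set (Fin n → ℚ_[p])), ψ (∑ i, ξ i * x i) * φ ξ ∂μ)
    {x : Fin n → ℚ_[p]} (hx : x ≠ 0) :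
    ∃ k₀ : ℤ, ∀ k ≥ k₀, g x = G p n μ ψ φ k x := by
  obtain ⟨Λ₀, hcomp, hopen, hspec⟩ := hg x hx
  obtain ⟨r, hr⟩ := hcomp.isBounded.subset_closedBall (0 : Fin n → ℚ_[p])
  obtain ⟨k₀, hk₀⟩ := pow_unbounded_of_one_lt r (p_one_lt (p := p))
  refine ⟨(k₀ : ℤ), fun k hk => ?_⟩
  have hsub : Λ₀ ≤ BzGrp p n k := by
    intro z hz
    have h1 : z ∈ Metric.closedBall (0 : Fin n → ℚ_[p]) r := hr hz
    rw [Metric.mem_closedBall, dist_zero_right] at h1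
    show z ∈ Bz p n k
    rw [mem_Bz]
    calc ‖z‖ ≤ r := h1
      _ ≤ (p:ℝ)^(k₀:ℤ) := by
          rw [zpow_natCast]
          exact le_of_lt hk₀
      _ ≤ (p:ℝ)^k := zpow_le_zpow_right₀ (le_of_lt p_one_lt) hk
  have := hspec (BzGrp p n k) (Bz_compact k) (Bz_isOpen hn k) hsub
  rw [this, BzGrp_coe, G]

end Assemble


set_option maxHeartbeats 1000000 in
set_option synthInstance.maxHeartbeats 200000 in
open Stmt6 Meas ClaimA ClaimA2 Osc Assemble in
theorem stmt_6 (p : ℕ) [Fact p.Prime] (n : ℕ) (hn : 2 ≤ n)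
    [MeasurableSpace ℚ_[p]] [BorelSpace ℚ_[p]]
    (μ : Measure (Fin n → ℚ_[p])) [μ.IsAddHaarMeasure]
    (hμ : μ (Metric.closedBall 0 1) = 1)
    (ψ : ℚ_[p] → ℂ) (hψ : IsStdAddChar p ψ)
    (φ : (Fin n → ℚ_[p]) → ℂ) (hφ : φ ∈ Cminus p n)
    (g : (Fin n → ℚ_[p]) → ℂ)
    (hg : ∀ x : Fin n → ℚ_[p], x ≠ 0 →
      ∃ Λ₀ : AddSubgroup (Fin n → ℚ_[p]),
        IsCompact (Λ₀ : Set (Fin n → ℚ_[p])) ∧ IsOpen (Λ₀ : Set (Fin n → ℚ_[p])) ∧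
        ∀ Λ : AddSubgroup (Fin n → ℚ_[p]),
          IsCompact (Λ : Set (Fin n → ℚ_[p])) → IsOpen (Λ : Set (Fin n → ℚ_[p])) → Λ₀ ≤ Λ →
            g x = ∫ ξ in (Λ : Set (Fin n → ℚ_[p])), ψ (∑ i, ξ i * x i) * φ ξ ∂μ) :
    ∀ ξ₀ : Fin n → ℚ_[p], ξ₀ ≠ 0 →
      IntegrableOn (fun x : Fin n → ℚ_[p] => g x * (ψ (-(∑ i, ξ₀ i * x i)) - 1))
        {x : Fin n → ℚ_[p] | x ≠ 0} μ ∧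
      ∫ x in {x : Fin n → ℚ_[p] | x ≠ 0}, g x * (ψ (-(∑ i, ξ₀ i * x i)) - 1) ∂μ = φ ξ₀ := by
  intro ξ₀ hξ₀
  have hn0 : 0 < n := by omega
  have hψc : Continuous ψ := psi_continuous hψ
  have hφc : Continuous φ := phi_continuous hφ
  have hψnorm : ∀ a : ℚ_[p], ‖ψ a‖ = 1 := by
    intro a
    exact hψ.2.1 a
  obtain ⟨ε, hε, hsupp⟩ := hφ.2
  obtain ⟨m, hm1, hm⟩ := claimA hφ hn0
  have hm1' : (1:ℤ) ≤ (m:ℤ) := by exact_mod_cast hm1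
  obtain ⟨d, hd⟩ := E_norm_eq_zpow hn0 hξ₀
  obtain ⟨s₀, hs₀⟩ := exists_pow_lt_of_lt_one hε
    (show (p:ℝ)⁻¹ < 1 by rw [inv_lt_one_iff₀]; right; exact p_one_lt)
  set s : ℤ := -(s₀:ℤ) with hsdef
  have hs : (p:ℝ)^s < ε := by
    have h1 : (p:ℝ)^s = ((p:ℝ)⁻¹)^s₀ := by
      rw [hsdef, zpow_neg, ← inv_zpow, zpow_natCast]
    rw [h1]
    exact hs₀
  set K : ℤ := (m:ℤ) - 1 + d with hKdef
  set c : (Fin n → ℚ_[p]) → ℂ := fun x => ψ (-(∑ i, ξ₀ i * x i)) - 1 with hcdef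
  set H : (Fin n → ℚ_[p]) → ℂ := fun x => G p n μ ψ φ K x * c x with hHdef
  set R : ℤ := (m:ℤ) - min s K with hRdef
  have hchar_int : ∀ (η : Fin n → ℚ_[p]) (k : ℤ),
      IntegrableOn (fun x : Fin n → ℚ_[p] => ψ (∑ i, η i * x i)) (Bz p n k) μ := by
    intro η k
    apply ContinuousOn.integrableOn_compact (Bz_compact k)
    apply Continuous.continuousOn
    exact hψc.comp (continuous_finset_sum _ (fun i _ => continuous_const.mul (continuous_apply i)))
  have hcsmall : ∀ x : Fin n → ℚ_[p], ‖x‖ ≤ (p:ℝ)^(-d) → c x = 0 := by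
    intro x hx
    rw [hcdef]
    simp only []
    have h1 : ψ (-(∑ i, ξ₀ i * x i)) = 1 := by
      apply hψ.2.2.1
      rw [norm_neg]
      calc ‖∑ i, ξ₀ i * x i‖ ≤ ‖ξ₀‖ * ‖x‖ := dot_norm_le _ _
        _ ≤ (p:ℝ)^d * (p:ℝ)^(-d) :=
            mul_le_mul (le_of_eq hd) hx (norm_nonneg x) (zpow_nonneg (le_of_lt p_pos) _)
        _ = 1 := zpow_mul_zpow_neg d
    rw [h1, sub_self]
  have hgH : ∀ x : Fin n → ℚ_[p], x ≠ 0 → g x * c x = H x := by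
    intro x hx
    by_cases hxs : ‖x‖ ≤ (p:ℝ)^(-d)
    · rw [hcsmall x hxs, mul_zero, hHdef]
      simp only []
      rw [hcsmall x hxs, mul_zero]
    · push_neg at hxs
      have hxlb : (p:ℝ)^(-d+1) ≤ ‖x‖ := zpow_lt_succ (E_norm_eq_zpow hn0 hx) hxs
      obtain ⟨k₀, hk₀⟩ := g_repr hn0 hg hx
      have h1 : g x = G p n μ ψ φ (max k₀ K) x := hk₀ _ (le_max_left _ _)
      have h2 : G p n μ ψ φ (max k₀ K) x = G p n μ ψ φ K x := by
        apply G_stab hn0 hψ hψc hφc hm1 hm x _ (le_max_right _ _)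
        calc (p:ℝ)^((m:ℤ)+1) = (p:ℝ)^(K+1) * (p:ℝ)^(-d+1) := by
              rw [← zpow_add₀ (ne_of_gt (p_pos (p:=p)))]
              congr 1
              rw [hKdef]
              ring
          _ ≤ (p:ℝ)^(K+1) * ‖x‖ :=
              mul_le_mul_of_nonneg_left hxlb (zpow_nonneg (le_of_lt p_pos) _)
      rw [hHdef]
      simp only []
      rw [h1, h2]
  have hHsupp : ∀ x : Fin n → ℚ_[p], x ∉ Bz p n (R-1) → H x = 0 := by
    intro x hx
    have hx1 : (p:ℝ)^(R-1) < ‖x‖ := lt_of_not_ge (fun h => hx (mem_Bz.2 h))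
    have hx0 : x ≠ 0 := by
      intro h
      rw [h, norm_zero] at hx1
      exact absurd hx1 (not_lt.2 (zpow_nonneg (le_of_lt p_pos) _))
    have hx2 : (p:ℝ)^R ≤ ‖x‖ := by
      have := zpow_lt_succ (E_norm_eq_zpow hn0 hx0) hx1
      rwa [show (R-1)+1 = R by ring] at this
    rw [hHdef]
    simp only []
    rw [G_vanish hn0 hψ hψc hφc hsupp hs hm1 hm K x (by rw [← hRdef]; exact hx2), zero_mul]
  have hdotc : Continuous (fun x : Fin n → ℚ_[p] => ψ (-(∑ i, ξ₀ i * x i))) := by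
    apply hψc.comp
    apply Continuous.neg
    exact continuous_finset_sum _ (fun i _ => continuous_const.mul (continuous_apply i))
  have hHcont : Continuous H := by
    rw [hHdef]
    exact (G_continuous hψ K).mul (hdotc.sub continuous_const)
  have hHcs : HasCompactSupport H := HasCompactSupport.intro (Bz_compact (R-1)) hHsupp
  have hHint : Integrable H μ := hHcont.integrable_of_hasCompactSupport hHcs
  have hmeas0 : MeasurableSet {x : Fin n → ℚ_[p] | x ≠ 0} := by
    have h1 : {x : Fin n → ℚ_[p] | x ≠ 0} = ({0} : Set (Fin n → ℚ_[p]))ᶜ := by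
      ext x; simp
    rw [h1]
    exact (measurableSet_singleton 0).compl
  constructor
  · exact (hHint.integrableOn).congr_fun (fun x hx => (hgH x hx).symm) hmeas0
  · set r : ℤ := max (max (R-1) (-s)) (max ((m:ℤ) - d) (max (-K) (1 - d))) with hrdef
    have hrR : R - 1 ≤ r := le_trans (le_max_left _ _) (le_max_left _ _)
    have hrs : -s ≤ r := le_trans (le_max_right _ _) (le_max_left _ _)
    have hrmd : (m:ℤ) - d ≤ r := le_trans (le_max_left _ _) (le_max_right _ _)
    have hrK : -K ≤ r :=
      le_trans (le_trans (le_max_left _ _) (le_max_right _ _)) (le_max_right _ _)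
    have hrd : 1 - d ≤ r :=
      le_trans (le_trans (le_max_right _ _) (le_max_right _ _)) (le_max_right _ _)
    have hstep1 : ∫ x in {x : Fin n → ℚ_[p] | x ≠ 0}, g x * c x ∂μ
        = ∫ x in {x : Fin n → ℚ_[p] | x ≠ 0}, H x ∂μ :=
      setIntegral_congr_fun hmeas0 (fun x hx => hgH x hx)
    have hstep2 : ∫ x in {x : Fin n → ℚ_[p] | x ≠ 0}, H x ∂μ = ∫ x, H x ∂μ := by
      rw [← MeasureTheory.integral_indicator hmeas0]
      apply integral_congr_ae
      have hz : μ ({0} : Set (Fin n → ℚ_[p])) = 0 := measure_singleton_zero hn0 hμ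
      have hae : ∀ᵐ x ∂μ, x ∉ ({0} : Set (Fin n → ℚ_[p])) := by
        rw [MeasureTheory.ae_iff]
        simpa using hz
      filter_upwards [hae] with x hx
      rw [Set.indicator_of_mem]
      simpa using hx
    have hstep3 : ∫ x, H x ∂μ = ∫ x in Bz p n r, H x ∂μ := by
      rw [← MeasureTheory.integral_indicator (Bz_measurable r)]
      congr 1
      funext x
      by_cases hx : x ∈ Bz p n r
      · rw [Set.indicator_of_mem hx]
      · rw [Set.indicator_of_notMem hx]
        exact hHsupp x (fun hmem => hx (Bz_mono (by omega) hmem))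
    set f : (Fin n → ℚ_[p]) → (Fin n → ℚ_[p]) → ℂ :=
      fun x ξ => ψ (∑ i, ξ i * x i) * φ ξ * c x with hfdef
    have hstep4 : ∫ x in Bz p n r, H x ∂μ
        = ∫ x in Bz p n r, ∫ ξ in Bz p n K, f x ξ ∂μ ∂μ := by
      apply setIntegral_congr_fun (Bz_measurable r)
      intro x _
      rw [hHdef, hfdef]
      simp only []
      rw [G, ← MeasureTheory.integral_mul_const]
    have hfcont : Continuous (Function.uncurry f) := by
      rw [hfdef]
      apply Continuous.mul
      · apply Continuous.mul
        · apply hψc.comp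
          apply continuous_finset_sum
          intro i _
          exact ((continuous_apply i).comp continuous_snd).mul
            ((continuous_apply i).comp continuous_fst)
        · exact hφc.comp continuous_snd
      · exact (hdotc.sub continuous_const).comp continuous_fst
    obtain ⟨C, hC⟩ := (Bz_compact (p := p) (n := n) K).exists_bound_of_continuousOn
      hφc.continuousOn
    have hfint : Integrable (Function.uncurry f)
        ((μ.restrict (Bz p n r)).prod (μ.restrict (Bz p n K))) := by
      rw [Measure.prod_restrict]
      haveI : IsFiniteMeasure ((μ.prod μ).restrict (Bz p n r ×ˢ Bz p n K)) := by
        constructor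
        rw [Measure.restrict_apply_univ, Measure.prod_prod]
        exact ENNReal.mul_lt_top (Bz_compact r).measure_lt_top (Bz_compact K).measure_lt_top
      refine MeasureTheory.Integrable.mono'
        (integrable_const (μ := (μ.prod μ).restrict (Bz p n r ×ˢ Bz p n K)) (1 * C * 2))
        (hfcont.aestronglyMeasurable.restrict) ?_
      filter_upwards [MeasureTheory.ae_restrict_mem
        ((Bz_measurable r).prod (Bz_measurable K))] with q hq
      obtain ⟨hq1, hq2⟩ := hq
      rw [hfdef]
      simp only [Function.uncurry]
      rw [norm_mul, norm_mul]
      have hb1 : ‖ψ (∑ i, q.2 i * q.1 i)‖ ≤ 1 := le_of_eq (hψnorm _)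
      have hb2 : ‖φ q.2‖ ≤ C := hC q.2 hq2
      have hb3 : ‖c q.1‖ ≤ 2 := by
        rw [hcdef]
        simp only []
        calc ‖ψ (-(∑ i, ξ₀ i * q.1 i)) - 1‖
            ≤ ‖ψ (-(∑ i, ξ₀ i * q.1 i))‖ + ‖(1:ℂ)‖ := norm_sub_le _ _
          _ ≤ 2 := by rw [hψnorm, norm_one]; norm_num
      have hC0 : (0:ℝ) ≤ C := le_trans (norm_nonneg _) (hC ξ₀ (by
        rw [mem_Bz, hd]
        exact zpow_le_zpow_right₀ (le_of_lt p_one_lt) (by omega)))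
      apply mul_le_mul _ hb3 (norm_nonneg _) (by positivity)
      exact mul_le_mul hb1 hb2 (norm_nonneg _) (by norm_num)
    have hswap : ∫ x in Bz p n r, ∫ ξ in Bz p n K, f x ξ ∂μ ∂μ
        = ∫ ξ in Bz p n K, ∫ x in Bz p n r, f x ξ ∂μ ∂μ :=
      MeasureTheory.integral_integral_swap hfint
    -- the inner integral evaluation
    have hBsub : Metric.closedBall ξ₀ ((p:ℝ)^(-r)) ⊆ Bz p n K := by
      intro ζ hζ
      rw [Metric.mem_closedBall, dist_eq_norm] at hζ
      rw [mem_Bz]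
      have h1 : ζ = (ζ - ξ₀) + ξ₀ := by ring
      rw [h1]
      refine le_trans (E_nonarch _ _) (max_le ?_ ?_)
      · exact le_trans hζ (zpow_le_zpow_right₀ (le_of_lt p_one_lt) (by omega))
      · rw [hd]
        exact zpow_le_zpow_right₀ (le_of_lt p_one_lt) (by omega)
    have hinner : ∀ ξ ∈ Bz p n K,
        ∫ x in Bz p n r, f x ξ ∂μ
          = (((μ (Bz p n r)).toReal : ℂ) * φ ξ₀)
            * (Metric.closedBall ξ₀ ((p:ℝ)^(-r))).indicator
                (1 : (Fin n → ℚ_[p]) → ℂ) ξ := by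
      intro ξ _
      have hrewr : ∀ x : Fin n → ℚ_[p],
          f x ξ = (ψ (∑ i, (ξ - ξ₀) i * x i) - ψ (∑ i, ξ i * x i)) * φ ξ := by
        intro x
        rw [hfdef, hcdef]
        simp only []
        have h1 : ∑ i, (ξ - ξ₀) i * x i = (∑ i, ξ i * x i) + (-(∑ i, ξ₀ i * x i)) := by
          rw [← Finset.sum_neg_distrib, ← Finset.sum_add_distrib]
          congr 1
          funext i
          simp only [Pi.sub_apply]
          ring
        rw [h1, hψ.1]
        ring
      rw [setIntegral_congr_fun (Bz_measurable r) (fun x _ => hrewr x),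
        MeasureTheory.integral_mul_const,
        MeasureTheory.integral_sub (hchar_int (ξ - ξ₀) r) (hchar_int ξ r)]
      by_cases hin : ‖ξ - ξ₀‖ ≤ (p:ℝ)^(-r)
      · have hI1 : ∫ x in Bz p n r, ψ (∑ i, (ξ - ξ₀) i * x i) ∂μ
            = ((μ (Bz p n r)).toReal : ℂ) := setIntegral_char_eq_measure hψ hin
        have hφeq : φ ξ = φ ξ₀ := by
          have h2 := hm ξ₀ (ξ - ξ₀) hξ₀ (by
            calc ‖ξ - ξ₀‖ ≤ (p:ℝ)^(-r) := hin
              _ ≤ (p:ℝ)^(-(m:ℤ)) * (p:ℝ)^d := by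
                  rw [← zpow_add₀ (ne_of_gt (p_pos (p:=p)))]
                  exact zpow_le_zpow_right₀ (le_of_lt p_one_lt) (by omega)
              _ = (p:ℝ)^(-(m:ℤ)) * ‖ξ₀‖ := by rw [hd])
          rwa [add_sub_cancel] at h2
        have hξbig : (p:ℝ)^(-r) < ‖ξ‖ := by
          have h3 : (p:ℝ)^d ≤ ‖ξ‖ := by
            by_contra hcon
            push_neg at hcon
            have h4 : ‖ξ₀‖ ≤ max ‖ξ₀ - ξ‖ ‖ξ‖ := by
              calc ‖ξ₀‖ = ‖(ξ₀ - ξ) + ξ‖ := by rw [show (ξ₀ - ξ) + ξ = ξ₀ from by ring]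
                _ ≤ max ‖ξ₀ - ξ‖ ‖ξ‖ := E_nonarch _ _
            rw [hd] at h4
            have h6 : ‖ξ₀ - ξ‖ ≤ (p:ℝ)^(-r) := by rw [norm_sub_rev]; exact hin
            have h7 : (p:ℝ)^(-r) < (p:ℝ)^d :=
              zpow_lt_zpow_right₀ p_one_lt (by omega)
            rcases max_cases ‖ξ₀ - ξ‖ ‖ξ‖ with ⟨hmax, _⟩ | ⟨hmax, _⟩ <;> rw [hmax] at h4 <;> linarith
          have h7 : (p:ℝ)^(-r) < (p:ℝ)^d := zpow_lt_zpow_right₀ p_one_lt (by omega)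
          linarith
        have hI2 : ∫ x in Bz p n r, ψ (∑ i, ξ i * x i) ∂μ = 0 :=
          setIntegral_char_eq_zero hn0 hψ hξbig
        have hmem : ξ ∈ Metric.closedBall ξ₀ ((p:ℝ)^(-r)) := by
          rw [Metric.mem_closedBall, dist_eq_norm]
          exact hin
        rw [hI1, hI2, sub_zero, hφeq, Set.indicator_of_mem hmem]
        simp
      · push_neg at hin
        have hI1 : ∫ x in Bz p n r, ψ (∑ i, (ξ - ξ₀) i * x i) ∂μ = 0 :=
          setIntegral_char_eq_zero hn0 hψ hin
        have hnmem : ξ ∉ Metric.closedBall ξ₀ ((p:ℝ)^(-r)) := by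
          rw [Metric.mem_closedBall, dist_eq_norm]
          push_neg
          exact hin
        rw [Set.indicator_of_notMem hnmem, mul_zero]
        by_cases hsm : ‖ξ‖ ≤ (p:ℝ)^(-r)
        · have hφ0' : φ ξ = 0 := by
            apply hsupp
            calc ‖ξ‖ ≤ (p:ℝ)^(-r) := hsm
              _ ≤ (p:ℝ)^s := zpow_le_zpow_right₀ (le_of_lt p_one_lt) (by omega)
              _ < ε := hs
          rw [hI1, hφ0', mul_zero]
        · push_neg at hsm
          have hI2 : ∫ x in Bz p n r, ψ (∑ i, ξ i * x i) ∂μ = 0 :=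
            setIntegral_char_eq_zero hn0 hψ hsm
          rw [hI1, hI2, sub_zero, zero_mul]
    have hstep5 : ∫ ξ in Bz p n K, ∫ x in Bz p n r, f x ξ ∂μ ∂μ
        = ∫ ξ in Bz p n K, (((μ (Bz p n r)).toReal : ℂ) * φ ξ₀)
            * (Metric.closedBall ξ₀ ((p:ℝ)^(-r))).indicator
                (1 : (Fin n → ℚ_[p]) → ℂ) ξ ∂μ :=
      setIntegral_congr_fun (Bz_measurable K) hinner
    have hstep6 : ∫ ξ in Bz p n K, (((μ (Bz p n r)).toReal : ℂ) * φ ξ₀)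
            * (Metric.closedBall ξ₀ ((p:ℝ)^(-r))).indicator
                (1 : (Fin n → ℚ_[p]) → ℂ) ξ ∂μ = φ ξ₀ := by
      rw [MeasureTheory.integral_const_mul,
        MeasureTheory.setIntegral_indicator Metric.isClosed_closedBall.measurableSet]
      rw [Set.inter_eq_self_of_subset_right hBsub]
      simp only [Pi.one_apply]
      rw [MeasureTheory.setIntegral_const]
      have hμB : μ (Metric.closedBall ξ₀ ((p:ℝ)^(-r))) = μ (Bz p n (-r)) :=
        measure_closedBall_eq ξ₀ _
      rw [Measure.real, hμB]
      have harith : ((μ (Bz p n r)).toReal : ℂ) * ((μ (Bz p n (-r))).toReal : ℂ) = 1 := by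
        rw [measure_Bz_toReal hμ, measure_Bz_toReal hμ]
        have h8 : (n:ℤ) * (-r) = -((n:ℤ) * r) := by ring
        rw [h8]
        have := zpow_mul_zpow_neg (p := p) ((n:ℤ) * r)
        exact_mod_cast this
      calc ((μ (Bz p n r)).toReal : ℂ) * φ ξ₀ * ((μ (Bz p n (-r))).toReal • (1:ℂ))
          = (((μ (Bz p n r)).toReal : ℂ) * ((μ (Bz p n (-r))).toReal : ℂ)) * φ ξ₀ := by
            rw [Complex.real_smul]
            push_cast
            ring
        _ = φ ξ₀ := by rw [harith, one_mul]
    rw [hstep1, hstep2, hstep3, hstep4, hswap, hstep5, hstep6]
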